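/- For a (G_Γ, β, γ0)-vertex algebra V (as in the context) the following hold: (i) Y_{−1}(u, Y_{−2}(v, w)) ∈ C₂(V) and Y_{−1}(Y_{−2}(u, v), w) ∈ C₂(V) for all u, v, w ∈ V; (ii) Y_{−1}(Y_{−1}(u, v), w) − Y_{−1}(u, Y_{−1}(v, w)) ∈ C₂(V) for all u, v, w ∈ V; (iii) Y_{−1}(u, v) − β(γ1, γ2)·Y_{−1}(v, u) ∈ C₂(V) for all γ1, γ2 ∈ Γ, u ∈ V_{γ1}, v ∈ V_{γ2}. Consequently Y_{−1} and the class of 𝟙 induce on R(V) = V/C₂(V) the structure of a unital associative β-commutative algebra (the C₂-algebra of V). -/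

import Mathlib

/-- The generalized binomial coefficient `binom(a, i) = a(a-1)⋯(a-i+1)/i!`
for `a : ℤ`, `i : ℕ`; it is an integer. -/
def zbinom (a : ℤ) (i : ℕ) : ℤ :=
  if 0 ≤ a then (a.toNat.choose i : ℤ)
  else (-1 : ℤ) ^ i * ((((i : ℤ) - a - 1).toNat).choose i : ℤ)

/-- A `(G_Γ, β, γ0)`-vertex algebra in component form, *without* the
derivation axiom (which is to be derived): a `Γ`-graded `k`-vector space `V`
(internal direct sum of the subspaces `Vg γ`), bilinear products
`Y n : V → V → V` of degree `n • γ0`, and a vacuum vector `vac ∈ V_0`,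
satisfying truncation, vacuum, creation and the `β`-Jacobi identity. -/
structure PreVA (k : Type*) [Field k] (Γ : Type*) [AddCommGroup Γ] [DecidableEq Γ]
    (γ0 : Γ) (β : Γ → Γ → k)
    (V : Type*) [AddCommGroup V] [Module k V] where
  Vg : Γ → Submodule k V
  internal : DirectSum.IsInternal Vg
  Y : ℤ → V →ₗ[k] V →ₗ[k] V
  vac : V
  vac_mem : vac ∈ Vg 0
  grading : ∀ (n : ℤ) (γ1 γ2 : Γ) (u v : V), u ∈ Vg γ1 → v ∈ Vg γ2 →
      Y n u v ∈ Vg (γ1 + γ2 + n • γ0)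
  truncation : ∀ u v : V, ∃ N : ℤ, ∀ n : ℤ, N ≤ n → Y n u v = 0
  vacuum_left : ∀ v : V, Y (-1) vac v = v
  vacuum_left' : ∀ n : ℤ, n ≠ -1 → ∀ v : V, Y n vac v = 0
  creation : ∀ v : V, Y (-1) v vac = v
  creation' : ∀ n : ℤ, 0 ≤ n → ∀ v : V, Y n v vac = 0
  jacobi : ∀ (l m n : ℤ) (γ1 γ2 : Γ) (u v w : V), u ∈ Vg γ1 → v ∈ Vg γ2 →
      (∑ᶠ i : ℕ, (((-1 : k) ^ i * (zbinom l i : k)) •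
          Y (m + l - (i : ℤ)) u (Y (n + (i : ℤ)) v w)))
        - ((-1 : k) ^ l * β γ1 γ2) •
            (∑ᶠ i : ℕ, (((-1 : k) ^ i * (zbinom l i : k)) •
              Y (n + l - (i : ℤ)) v (Y (m + (i : ℤ)) u w)))
        = ∑ᶠ i : ℕ, ((zbinom m i : k) •
            Y (m + n - (i : ℤ)) (Y (l + (i : ℤ)) u v) w)


/-- A `(G_Γ, β, γ0)`-vertex algebra in component form: a `PreVA` together
with the derivation properties of `D(v) = Y_{-2}(v, 𝟙)`, namely
`D(Y_n(u,v)) - Y_n(u, D v) = -n • Y_{n-1}(u,v)` and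
`Y_n(D u, v) = -n • Y_{n-1}(u,v)`. -/
structure VA (k : Type*) [Field k] (Γ : Type*) [AddCommGroup Γ] [DecidableEq Γ]
    (γ0 : Γ) (β : Γ → Γ → k)
    (V : Type*) [AddCommGroup V] [Module k V]
    extends PreVA k Γ γ0 β V where
  deriv1 : ∀ (n : ℤ) (u v : V),
      Y (-2) (Y n u v) vac - Y n u (Y (-2) v vac) = (-n) • Y (n - 1) u v
  deriv2 : ∀ (n : ℤ) (u v : V),
      Y n (Y (-2) u vac) v = (-n) • Y (n - 1) u v

/-- The subspace `C₂(V) = span_k { Y_{-2}(u, v) : u, v ∈ V }`. -/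
def C2 {k Γ V : Type*} [Field k] [AddCommGroup Γ] [DecidableEq Γ]
    [AddCommGroup V] [Module k V] {γ0 : Γ} {β : Γ → Γ → k}
    (A : VA k Γ γ0 β V) : Submodule k V :=
  Submodule.span k {x : V | ∃ u v : V, A.Y (-2) u v = x}


section Aux

variable {k Γ V : Type*} [Field k] [CharZero k] [AddCommGroup Γ]
    [DecidableEq Γ] [AddCommGroup V] [Module k V]
    {γ0 : Γ} {β : Γ → Γ → k}

lemma zbinom_zero (a : ℤ) : zbinom a 0 = 1 := by
  unfold zbinom; split <;> simp

lemma zbinom_zero_of_ne {i : ℕ} (hi : i ≠ 0) : zbinom 0 i = 0 := by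
  unfold zbinom
  simp [Nat.choose_eq_zero_of_lt (Nat.pos_of_ne_zero hi)]

lemma C2_basic (A : VA k Γ γ0 β V) (u v : V) : A.Y (-2) u v ∈ C2 A :=
  Submodule.subset_span ⟨u, v, rfl⟩

lemma C2_low (A : VA k Γ γ0 β V) :
    ∀ (j : ℕ) (u v : V), A.Y (-2 - (j : ℤ)) u v ∈ C2 A := by
  intro j
  induction j with
  | zero => intro u v; simpa using C2_basic A u v
  | succ j ih =>
    intro u v
    have h := A.deriv2 (-2 - (j : ℤ)) (u) v
    have hmem : (-(-2 - (j : ℤ))) • A.Y (-2 - (j : ℤ) - 1) u v ∈ C2 A := by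
      rw [← h]; exact ih _ v
    rw [← Int.cast_smul_eq_zsmul k] at hmem
    have hne : ((-(-2 - (j : ℤ)) : ℤ) : k) ≠ 0 := by
      have h2 : (-(-2 - (j : ℤ)) : ℤ) ≠ 0 := by omega
      exact_mod_cast h2
    have h3 := (C2 A).smul_mem (((-(-2 - (j : ℤ)) : ℤ) : k))⁻¹ hmem
    rw [inv_smul_smul₀ hne] at h3
    have hidx : (-2 - ((j + 1 : ℕ) : ℤ)) = (-2 - (j : ℤ) - 1) := by push_cast; ring
    rw [hidx]
    exact h3

lemma C2_le (A : VA k Γ γ0 β V) (m : ℤ) (hm : m ≤ -2) (u v : V) :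
    A.Y m u v ∈ C2 A := by
  obtain ⟨j, hj⟩ : ∃ j : ℕ, m = -2 - (j : ℤ) := ⟨(-2 - m).toNat, by omega⟩
  rw [hj]; exact C2_low A j u v

lemma finsum_mem' {α : Type*} (S : Submodule k V) (f : α → V)
    (h : ∀ i, f i ∈ S) : (∑ᶠ i, f i) ∈ S := by
  by_cases hf : (Function.support f).Finite
  · rw [finsum_eq_sum f hf]; exact Submodule.sum_mem S fun i _ => h i
  · rw [finsum_of_infinite_support hf]; exact S.zero_mem

lemma finsum_peel (f : ℕ → V) (N : ℕ) (h : ∀ i, N + 1 ≤ i → f i = 0) :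
    (∑ᶠ i, f i) = f 0 + ∑ i ∈ Finset.range N, f (i + 1) := by
  rw [finsum_eq_sum_of_support_subset f (s := Finset.range (N + 1)) ?_,
    Finset.sum_range_succ', add_comm]
  intro i hi
  simp only [Finset.coe_range, Set.mem_Iio]
  by_contra hlt
  exact hi (h i (by omega))

lemma hom1 (A : VA k Γ γ0 β V) (γ1 γ2 : Γ) (u v w : V)
    (hu : u ∈ A.Vg γ1) (hv : v ∈ A.Vg γ2) :
    A.Y (-1) u (A.Y (-2) v w) ∈ C2 A := by
  have hj := A.jacobi 0 (-1) (-2) γ1 γ2 u v w hu hv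
  have h1 : (∑ᶠ i : ℕ, (((-1 : k) ^ i * (zbinom 0 i : k)) •
      A.Y (-1 + 0 - (i : ℤ)) u (A.Y (-2 + (i : ℤ)) v w)))
      = A.Y (-1) u (A.Y (-2) v w) := by
    rw [finsum_eq_single _ 0 (fun i hi => by rw [zbinom_zero_of_ne hi]; simp)]
    norm_num [zbinom_zero]
  rw [h1, sub_eq_iff_eq_add] at hj
  rw [hj]
  refine add_mem (finsum_mem' _ _ fun i => ?_)
    (Submodule.smul_mem _ _ (finsum_mem' _ _ fun i => ?_))
  · exact Submodule.smul_mem _ _ (C2_le A _ (by omega) _ _)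
  · exact Submodule.smul_mem _ _ (C2_le A _ (by omega) _ _)

lemma hom2 (A : VA k Γ γ0 β V) (γ1 γ2 : Γ) (u v w : V)
    (hu : u ∈ A.Vg γ1) (hv : v ∈ A.Vg γ2) :
    A.Y (-1) (A.Y (-2) u v) w ∈ C2 A := by
  have hj := A.jacobi (-2) (-1) 0 γ1 γ2 u v w hu hv
  obtain ⟨M, hM⟩ := A.truncation u v
  set N : ℕ := (M + 2).toNat with hN
  have hsupp : ∀ i : ℕ, N + 1 ≤ i → (((zbinom (-1) i : k)) •
      A.Y (-1 + 0 - (i : ℤ)) (A.Y (-2 + (i : ℤ)) u v) w) = 0 := by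
    intro i hi
    rw [hM (-2 + (i : ℤ)) (by omega)]
    simp
  rw [finsum_peel _ N hsupp] at hj
  have h0 : ((zbinom (-1) (0 : ℕ) : k) •
      A.Y (-1 + 0 - ((0 : ℕ) : ℤ)) (A.Y (-2 + ((0 : ℕ) : ℤ)) u v) w)
      = A.Y (-1) (A.Y (-2) u v) w := by norm_num [zbinom_zero]
  rw [h0] at hj
  rw [eq_sub_of_add_eq hj.symm]
  refine sub_mem (sub_mem (finsum_mem' _ _ fun i => ?_)
      (Submodule.smul_mem _ _ (finsum_mem' _ _ fun i => ?_)))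
      (Submodule.sum_mem _ fun i _ => ?_)
  · exact Submodule.smul_mem _ _ (C2_le A _ (by omega) _ _)
  · exact Submodule.smul_mem _ _ (C2_le A _ (by omega) _ _)
  · exact Submodule.smul_mem _ _ (C2_le A _ (by omega) _ _)

lemma hom3 (A : VA k Γ γ0 β V) (γ1 γ2 : Γ) (u v w : V)
    (hu : u ∈ A.Vg γ1) (hv : v ∈ A.Vg γ2) :
    A.Y (-1) (A.Y (-1) u v) w - A.Y (-1) u (A.Y (-1) v w) ∈ C2 A := by
  have hj := A.jacobi (-1) 0 (-1) γ1 γ2 u v w hu hv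
  obtain ⟨M, hM⟩ := A.truncation v w
  set N : ℕ := (M + 1).toNat with hN
  have hsupp : ∀ i : ℕ, N + 1 ≤ i → ((((-1 : k) ^ i * (zbinom (-1) i : k)) •
      A.Y (0 + -1 - (i : ℤ)) u (A.Y (-1 + (i : ℤ)) v w)) = 0) := by
    intro i hi
    rw [hM (-1 + (i : ℤ)) (by omega)]
    simp
  rw [finsum_peel _ N hsupp] at hj
  have h3 : (∑ᶠ i : ℕ, ((zbinom 0 i : k) •
      A.Y (0 + -1 - (i : ℤ)) (A.Y (-1 + (i : ℤ)) u v) w))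
      = A.Y (-1) (A.Y (-1) u v) w := by
    rw [finsum_eq_single _ 0 (fun i hi => by rw [zbinom_zero_of_ne hi]; simp)]
    norm_num [zbinom_zero]
  rw [h3] at hj
  have h0 : (((-1 : k) ^ (0 : ℕ) * (zbinom (-1) (0 : ℕ) : k)) •
      A.Y (0 + -1 - ((0 : ℕ) : ℤ)) u (A.Y (-1 + ((0 : ℕ) : ℤ)) v w))
      = A.Y (-1) u (A.Y (-1) v w) := by norm_num [zbinom_zero]
  rw [h0] at hj
  rw [← hj]
  have habel : ∀ a b c : V, (a + b - c) - a = b - c := fun a b c => by abel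
  rw [habel]
  refine sub_mem (Submodule.sum_mem _ fun i _ => ?_)
    (Submodule.smul_mem _ _ (finsum_mem' _ _ fun i => ?_))
  · exact Submodule.smul_mem _ _ (C2_le A _ (by omega) _ _)
  · exact Submodule.smul_mem _ _ (C2_le A _ (by omega) _ _)

lemma hom4 (A : VA k Γ γ0 β V) (γ1 γ2 : Γ) (u v : V)
    (hu : u ∈ A.Vg γ1) (hv : v ∈ A.Vg γ2) :
    A.Y (-1) u v - β γ1 γ2 • A.Y (-1) v u ∈ C2 A := by
  have hj := A.jacobi 0 (-1) (-1) γ1 γ2 u v A.vac hu hv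
  have h1 : (∑ᶠ i : ℕ, (((-1 : k) ^ i * (zbinom 0 i : k)) •
      A.Y (-1 + 0 - (i : ℤ)) u (A.Y (-1 + (i : ℤ)) v A.vac)))
      = A.Y (-1) u v := by
    rw [finsum_eq_single _ 0 (fun i hi => by rw [zbinom_zero_of_ne hi]; simp)]
    norm_num [zbinom_zero, A.creation]
  have h2 : (∑ᶠ i : ℕ, (((-1 : k) ^ i * (zbinom 0 i : k)) •
      A.Y (-1 + 0 - (i : ℤ)) v (A.Y (-1 + (i : ℤ)) u A.vac)))
      = A.Y (-1) v u := by
    rw [finsum_eq_single _ 0 (fun i hi => by rw [zbinom_zero_of_ne hi]; simp)]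
    norm_num [zbinom_zero, A.creation]
  rw [h1, h2] at hj
  have hs : ((-1 : k) ^ (0 : ℤ) * β γ1 γ2) = β γ1 γ2 := by norm_num
  rw [hs] at hj
  rw [hj]
  exact finsum_mem' _ _ fun i => Submodule.smul_mem _ _ (C2_le A _ (by omega) _ _)

lemma homog_ext (A : VA k Γ γ0 β V) (P : V → V → Prop)
    (h0l : ∀ v, P 0 v) (h0r : ∀ u, P u 0)
    (haddl : ∀ u1 u2 v, P u1 v → P u2 v → P (u1 + u2) v)
    (haddr : ∀ u v1 v2, P u v1 → P u v2 → P u (v1 + v2))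
    (hhom : ∀ γ1 γ2 u v, u ∈ A.Vg γ1 → v ∈ A.Vg γ2 → P u v) (u v : V) :
    P u v := by
  have hu : u ∈ ⨆ γ, A.Vg γ := by
    rw [A.internal.submodule_iSup_eq_top]; trivial
  have hv : v ∈ ⨆ γ, A.Vg γ := by
    rw [A.internal.submodule_iSup_eq_top]; trivial
  refine Submodule.iSup_induction (motive := fun x => P x v) _ hu ?_ (h0l v)
      (fun x y hx hy => haddl x y v hx hy)
  intro γ1 x hx
  refine Submodule.iSup_induction (motive := fun z => P x z) _ hv ?_ (h0r x)
      (fun a b ha hb => haddr x a b ha hb)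
  intro γ2 y hy
  exact hhom γ1 γ2 x y hx hy

lemma mem_ia (A : VA k Γ γ0 β V) (u v w : V) :
    A.Y (-1) u (A.Y (-2) v w) ∈ C2 A := by
  refine homog_ext A (fun u v => A.Y (-1) u (A.Y (-2) v w) ∈ C2 A)
    ?_ ?_ ?_ ?_ (fun γ1 γ2 x y hx hy => hom1 A γ1 γ2 x y w hx hy) u v
  · intro v
    show A.Y (-1) 0 (A.Y (-2) v w) ∈ C2 A
    simpa using (C2 A).zero_mem
  · intro u
    show A.Y (-1) u (A.Y (-2) 0 w) ∈ C2 A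
    simpa using (C2 A).zero_mem
  · intro u1 u2 v h1 h2
    show A.Y (-1) (u1 + u2) (A.Y (-2) v w) ∈ C2 A
    rw [map_add, LinearMap.add_apply]
    exact add_mem h1 h2
  · intro u v1 v2 h1 h2
    show A.Y (-1) u (A.Y (-2) (v1 + v2) w) ∈ C2 A
    rw [map_add, LinearMap.add_apply, map_add]
    exact add_mem h1 h2

lemma mem_ib (A : VA k Γ γ0 β V) (u v w : V) :
    A.Y (-1) (A.Y (-2) u v) w ∈ C2 A := by
  refine homog_ext A (fun u v => A.Y (-1) (A.Y (-2) u v) w ∈ C2 A)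
    ?_ ?_ ?_ ?_ (fun γ1 γ2 x y hx hy => hom2 A γ1 γ2 x y w hx hy) u v
  · intro v
    show A.Y (-1) (A.Y (-2) 0 v) w ∈ C2 A
    simpa using (C2 A).zero_mem
  · intro u
    show A.Y (-1) (A.Y (-2) u 0) w ∈ C2 A
    simpa using (C2 A).zero_mem
  · intro u1 u2 v h1 h2
    show A.Y (-1) (A.Y (-2) (u1 + u2) v) w ∈ C2 A
    rw [map_add, LinearMap.add_apply, map_add, LinearMap.add_apply]
    exact add_mem h1 h2
  · intro u v1 v2 h1 h2
    show A.Y (-1) (A.Y (-2) u (v1 + v2)) w ∈ C2 A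
    rw [map_add, map_add, LinearMap.add_apply]
    exact add_mem h1 h2

lemma mem_ii (A : VA k Γ γ0 β V) (u v w : V) :
    A.Y (-1) (A.Y (-1) u v) w - A.Y (-1) u (A.Y (-1) v w) ∈ C2 A := by
  refine homog_ext A
    (fun u v => A.Y (-1) (A.Y (-1) u v) w - A.Y (-1) u (A.Y (-1) v w) ∈ C2 A)
    ?_ ?_ ?_ ?_ (fun γ1 γ2 x y hx hy => hom3 A γ1 γ2 x y w hx hy) u v
  · intro v
    show A.Y (-1) (A.Y (-1) 0 v) w - A.Y (-1) 0 (A.Y (-1) v w) ∈ C2 A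
    simpa using (C2 A).zero_mem
  · intro u
    show A.Y (-1) (A.Y (-1) u 0) w - A.Y (-1) u (A.Y (-1) 0 w) ∈ C2 A
    simpa using (C2 A).zero_mem
  · intro u1 u2 v h1 h2
    show A.Y (-1) (A.Y (-1) (u1 + u2) v) w
        - A.Y (-1) (u1 + u2) (A.Y (-1) v w) ∈ C2 A
    have e : A.Y (-1) (A.Y (-1) (u1 + u2) v) w
        - A.Y (-1) (u1 + u2) (A.Y (-1) v w)
        = (A.Y (-1) (A.Y (-1) u1 v) w - A.Y (-1) u1 (A.Y (-1) v w))
          + (A.Y (-1) (A.Y (-1) u2 v) w - A.Y (-1) u2 (A.Y (-1) v w)) := by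
      simp only [map_add, LinearMap.add_apply]; abel
    rw [e]
    exact add_mem h1 h2
  · intro u v1 v2 h1 h2
    show A.Y (-1) (A.Y (-1) u (v1 + v2)) w
        - A.Y (-1) u (A.Y (-1) (v1 + v2) w) ∈ C2 A
    have e : A.Y (-1) (A.Y (-1) u (v1 + v2)) w
        - A.Y (-1) u (A.Y (-1) (v1 + v2) w)
        = (A.Y (-1) (A.Y (-1) u v1) w - A.Y (-1) u (A.Y (-1) v1 w))
          + (A.Y (-1) (A.Y (-1) u v2) w - A.Y (-1) u (A.Y (-1) v2 w)) := by
      simp only [map_add, LinearMap.add_apply]; abel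
    rw [e]
    exact add_mem h1 h2

lemma idealL (A : VA k Γ γ0 β V) {c : V} (hc : c ∈ C2 A) (v : V) :
    A.Y (-1) c v ∈ C2 A := by
  have hle : C2 A ≤ Submodule.comap ((A.Y (-1)).flip v) (C2 A) := by
    rw [C2, Submodule.span_le]
    rintro x ⟨a, b, rfl⟩
    simp only [SetLike.mem_coe, Submodule.mem_comap, LinearMap.flip_apply]
    exact mem_ib A a b v
  simpa only [Submodule.mem_comap, LinearMap.flip_apply] using hle hc

lemma idealR (A : VA k Γ γ0 β V) (u : V) {c : V} (hc : c ∈ C2 A) :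
    A.Y (-1) u c ∈ C2 A := by
  have hle : C2 A ≤ Submodule.comap (A.Y (-1) u) (C2 A) := by
    rw [C2, Submodule.span_le]
    rintro x ⟨a, b, rfl⟩
    simp only [SetLike.mem_coe, Submodule.mem_comap]
    exact mem_ia A u a b
  simpa only [Submodule.mem_comap] using hle hc

end Aux

/-- for a `(G_Γ, β, γ0)`-vertex algebra `V`:
(i) `Y_{-1}(u, Y_{-2}(v,w)) ∈ C₂(V)` and `Y_{-1}(Y_{-2}(u,v), w) ∈ C₂(V)`;
(ii) `Y_{-1}(Y_{-1}(u,v), w) - Y_{-1}(u, Y_{-1}(v,w)) ∈ C₂(V)`;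
(iii) `Y_{-1}(u,v) - β(γ1,γ2) • Y_{-1}(v,u) ∈ C₂(V)` for homogeneous `u, v`.
Consequently `Y_{-1}` and the class of `𝟙` induce on `R(V) = V/C₂(V)` the
structure of a unital associative `β`-commutative algebra. -/


theorem statement11 {k Γ V : Type*} [Field k] [CharZero k] [AddCommGroup Γ]
    [DecidableEq Γ] [AddCommGroup V] [Module k V]
    (γ0 : Γ) (β : Γ → Γ → k) (A : VA k Γ γ0 β V) :
    (∀ u v w : V,
      A.Y (-1) u (A.Y (-2) v w) ∈ C2 A ∧ A.Y (-1) (A.Y (-2) u v) w ∈ C2 A) ∧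
    (∀ u v w : V,
      A.Y (-1) (A.Y (-1) u v) w - A.Y (-1) u (A.Y (-1) v w) ∈ C2 A) ∧
    (∀ (γ1 γ2 : Γ) (u v : V), u ∈ A.Vg γ1 → v ∈ A.Vg γ2 →
      A.Y (-1) u v - β γ1 γ2 • A.Y (-1) v u ∈ C2 A) ∧
    (∃ π : (V ⧸ C2 A) → (V ⧸ C2 A) → (V ⧸ C2 A),
      (∀ u v : V, π (Submodule.Quotient.mk u) (Submodule.Quotient.mk v)
          = Submodule.Quotient.mk (A.Y (-1) u v)) ∧
      (∀ a b c : V ⧸ C2 A, π (π a b) c = π a (π b c)) ∧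
      (∀ a : V ⧸ C2 A, π (Submodule.Quotient.mk A.vac) a = a ∧
          π a (Submodule.Quotient.mk A.vac) = a) ∧
      (∀ (γ1 γ2 : Γ) (u v : V), u ∈ A.Vg γ1 → v ∈ A.Vg γ2 →
        π (Submodule.Quotient.mk u) (Submodule.Quotient.mk v)
          = β γ1 γ2 • π (Submodule.Quotient.mk v) (Submodule.Quotient.mk u))) := by
  refine ⟨fun u v w => ⟨mem_ia A u v w, mem_ib A u v w⟩, mem_ii A, hom4 A, ?_⟩
  have hwd : ∀ a₁ a₂ b₁ b₂ : V,
      (Submodule.quotientRel (C2 A)).r a₁ b₁ →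
      (Submodule.quotientRel (C2 A)).r a₂ b₂ →
      Submodule.Quotient.mk (p := C2 A) (A.Y (-1) a₁ a₂)
        = Submodule.Quotient.mk (A.Y (-1) b₁ b₂) := by
    intro a₁ a₂ b₁ b₂ h1 h2
    have h1' : a₁ - b₁ ∈ C2 A := (Submodule.quotientRel_def _).mp h1
    have h2' : a₂ - b₂ ∈ C2 A := (Submodule.quotientRel_def _).mp h2
    rw [Submodule.Quotient.eq]
    have e : A.Y (-1) a₁ a₂ - A.Y (-1) b₁ b₂
        = A.Y (-1) (a₁ - b₁) a₂ + A.Y (-1) b₁ (a₂ - b₂) := by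
      simp only [map_sub, LinearMap.sub_apply]; abel
    rw [e]
    exact add_mem (idealL A h1' a₂) (idealR A b₁ h2')
  set π : (V ⧸ C2 A) → (V ⧸ C2 A) → (V ⧸ C2 A) := fun a b =>
    Quotient.liftOn₂' a b
      (fun u v => Submodule.Quotient.mk (A.Y (-1) u v)) hwd with hπ
  have hmk : ∀ u v : V, π (Submodule.Quotient.mk u) (Submodule.Quotient.mk v)
      = Submodule.Quotient.mk (A.Y (-1) u v) := fun u v => rfl
  refine ⟨π, hmk, ?_, ?_, ?_⟩
  · intro a b c
    obtain ⟨u, rfl⟩ := Submodule.Quotient.mk_surjective _ a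
    obtain ⟨v, rfl⟩ := Submodule.Quotient.mk_surjective _ b
    obtain ⟨w, rfl⟩ := Submodule.Quotient.mk_surjective _ c
    rw [hmk, hmk, hmk, hmk, Submodule.Quotient.eq]
    exact mem_ii A u v w
  · intro a
    obtain ⟨u, rfl⟩ := Submodule.Quotient.mk_surjective _ a
    constructor
    · rw [hmk, A.vacuum_left]
    · rw [hmk, A.creation]
  · intro γ1 γ2 u v hu hv
    rw [hmk, hmk, ← Submodule.Quotient.mk_smul, Submodule.Quotient.eq]
    exact hom4 A γ1 γ2 u v hu hv
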